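/- Jacobi triple product in terms of the normalized theta function: for 0 < p < 1 and nonzero complex z, (p; p)_∞ · θ(z) = ∑_{n=-∞}^{∞} (-1)^n p^{n(n-1)/2} z^n. -/

import Mathlib

open Finset Filter Topology

/-- The infinite q-Pochhammer symbol `(a; p)_∞ = ∏_{i=0}^∞ (1 - a p^i)`. -/
noncomputable def poch (p a : ℂ) : ℂ := ∏' i : ℕ, (1 - a * p ^ i)

/-- The normalized theta function `θ(z) = (z; p)_∞ (p/z; p)_∞`. -/
noncomputable def theta (p z : ℂ) : ℂ := poch p z * poch p (p / z)

/-- partial q-Pochhammer `(p;p)_m = ∏_{i=1}^m (1-p^i)` -/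
noncomputable def qp (p : ℝ) (m : ℕ) : ℝ := ∏ k ∈ Finset.range m, (1 - p ^ (k + 1))

/-- Gaussian binomial coefficient -/
noncomputable def gb (p : ℝ) (m j : ℕ) : ℝ :=
  if j ≤ m then qp p m / (qp p j * qp p (m - j)) else 0

/-- the summand of the Jacobi triple product -/
noncomputable def w (p : ℝ) (z : ℂ) (n : ℤ) : ℂ :=
  (-1 : ℂ) ^ n * (p : ℂ) ^ (n * (n - 1) / 2) * z ^ n

/-- the truncated summand used in the Tannery argument -/
noncomputable def jtpF (p : ℝ) (z : ℂ) (N : ℕ) (n : ℤ) : ℂ :=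
  if n ∈ Finset.Icc (-(N : ℤ)) (N : ℤ) then
    ((⨅ m, qp p m : ℝ) : ℂ) * ((gb p (N + N) (((N : ℤ) + n).toNat) : ℝ) : ℂ) * w p z n
  else 0

section
variable {p : ℝ}

lemma fac_pos (hp0 : 0 < p) (hp1 : p < 1) (k : ℕ) : 0 < 1 - p ^ (k + 1) := by
  have : p ^ (k + 1) < 1 := pow_lt_one₀ hp0.le hp1 (Nat.succ_ne_zero k)
  linarith

lemma qp_pos (hp0 : 0 < p) (hp1 : p < 1) (m : ℕ) : 0 < qp p m :=
  Finset.prod_pos fun k _ => fac_pos hp0 hp1 k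

lemma qp_ne (hp0 : 0 < p) (hp1 : p < 1) (m : ℕ) : qp p m ≠ 0 := (qp_pos hp0 hp1 m).ne'

lemma qp_le_one (hp0 : 0 < p) (hp1 : p < 1) (m : ℕ) : qp p m ≤ 1 :=
  Finset.prod_le_one (fun k _ => (fac_pos hp0 hp1 k).le)
    (fun k _ => by have : 0 < p ^ (k + 1) := pow_pos hp0 _; linarith)

lemma qp_succ (m : ℕ) : qp p (m + 1) = qp p m * (1 - p ^ (m + 1)) :=
  Finset.prod_range_succ _ m

lemma qp_zero : qp p 0 = 1 := rfl

lemma qp_antitone (hp0 : 0 < p) (hp1 : p < 1) : Antitone (qp p) := by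
  apply antitone_nat_of_succ_le
  intro m
  rw [qp_succ]
  have h1 := qp_pos hp0 hp1 m
  have h2 := fac_pos hp0 hp1 m
  have h3 : 0 < p ^ (m + 1) := pow_pos hp0 _
  nlinarith

lemma gb_zero_right (hp0 : 0 < p) (hp1 : p < 1) (m : ℕ) : gb p m 0 = 1 := by
  simp [gb, qp_zero, div_self (qp_ne hp0 hp1 m)]

lemma gb_self (hp0 : 0 < p) (hp1 : p < 1) (m : ℕ) : gb p m m = 1 := by
  simp [gb, qp_zero, div_self (qp_ne hp0 hp1 m)]

lemma gb_of_gt {m j : ℕ} (h : m < j) : gb p m j = 0 := by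
  simp [gb, Nat.not_le.mpr h]

lemma gb_nonneg (hp0 : 0 < p) (hp1 : p < 1) (m j : ℕ) : 0 ≤ gb p m j := by
  unfold gb
  split
  · exact div_nonneg (qp_pos hp0 hp1 _).le
      (mul_nonneg (qp_pos hp0 hp1 _).le (qp_pos hp0 hp1 _).le)
  · exact le_refl 0

/-- q-Pascal rule -/
lemma gb_pascal (hp0 : 0 < p) (hp1 : p < 1) {m j : ℕ} (hjm : j ≤ m) :
    gb p (m + 1) (j + 1) = gb p m (j + 1) + p ^ (m - j) * gb p m j := by
  rcases eq_or_lt_of_le hjm with rfl | hlt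
  · rw [gb_self hp0 hp1, gb_of_gt (Nat.lt_succ_self j), gb_self hp0 hp1]
    simp
  · obtain ⟨d, rfl⟩ : ∃ d, m = j + d + 1 := ⟨m - j - 1, by omega⟩
    have h1 : j + 1 ≤ j + d + 1 := by omega
    rw [gb, gb, gb, if_pos (by omega), if_pos h1, if_pos (by omega)]
    have e1 : j + d + 1 + 1 - (j + 1) = d + 1 := by omega
    have e2 : j + d + 1 - (j + 1) = d := by omega
    have e3 : j + d + 1 - j = d + 1 := by omega
    rw [e1, e2, e3]
    have hq1 : qp p (j + d + 1 + 1) = qp p (j + d + 1) * (1 - p ^ (j + d + 1 + 1)) := qp_succ _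
    have hq2 : qp p (d + 1) = qp p d * (1 - p ^ (d + 1)) := qp_succ _
    have hq3 : qp p (j + 1) = qp p j * (1 - p ^ (j + 1)) := qp_succ _
    have n1 := qp_ne hp0 hp1 (j + d + 1)
    have n2 := qp_ne hp0 hp1 j
    have n3 := qp_ne hp0 hp1 d
    have n4 : (1 - p ^ (j + 1)) ≠ 0 := (fac_pos hp0 hp1 j).ne'
    have n5 : (1 - p ^ (d + 1)) ≠ 0 := (fac_pos hp0 hp1 d).ne'
    rw [hq1, hq2, hq3]
    field_simp
    ring

lemma gauss (hp0 : 0 < p) (hp1 : p < 1) (m : ℕ) (y : ℂ) :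
    ∏ k ∈ Finset.range m, (1 + y * (p : ℂ) ^ k)
      = ∑ j ∈ Finset.range (m + 1), (p : ℂ) ^ (j.choose 2) * (gb p m j : ℂ) * y ^ j := by
  induction m with
  | zero => simp [gb_zero_right hp0 hp1]
  | succ m ih =>
    set f : ℕ → ℂ := fun j => (p : ℂ) ^ (j.choose 2) * (gb p m j : ℂ) * y ^ j with hf
    set F : ℕ → ℂ := fun j => (p : ℂ) ^ (j.choose 2) * (gb p (m + 1) j : ℂ) * y ^ j with hF
    have hz : f (m + 1) = 0 := by
      simp only [hf, gb_of_gt (Nat.lt_succ_self m)]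
      simp
    have hS : ∑ j ∈ Finset.range (m + 1), f j
        = f 0 + ∑ j ∈ Finset.range (m + 1), f (j + 1) := by
      rw [Finset.sum_range_succ' f m, Finset.sum_range_succ (fun j => f (j + 1)) m]
      show _ = f 0 + (_ + f (m + 1))
      rw [hz, add_zero, add_comm]
    rw [Finset.prod_range_succ, ih]
    show (∑ j ∈ Finset.range (m + 1), f j) * (1 + y * (p : ℂ) ^ m)
        = ∑ j ∈ Finset.range (m + 2), F j
    rw [Finset.sum_range_succ' F (m + 1)]
    have key : ∀ j ∈ Finset.range (m + 1), F (j + 1) = f (j + 1) + f j * (y * (p : ℂ) ^ m) := by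
      intro j hj
      have hjm : j ≤ m := by simpa using Nat.lt_succ_iff.mp (Finset.mem_range.mp hj)
      have hp' : gb p (m + 1) (j + 1) = gb p m (j + 1) + p ^ (m - j) * gb p m j :=
        gb_pascal hp0 hp1 hjm
      have hcc : (j + 1).choose 2 = j.choose 2 + j := by
        rw [Nat.choose_succ_succ]
        simp [Nat.choose_one_right, Nat.add_comm]
      have hpow : (p : ℂ) ^ ((j + 1).choose 2) * (p : ℝ) ^ (m - j)
          = (p : ℂ) ^ (j.choose 2) * (p : ℂ) ^ m := by
        push_cast
        rw [← pow_add, ← pow_add, hcc]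
        congr 1
        omega
      simp only [hF, hf]
      push_cast [hp']
      linear_combination ((gb p m j : ℂ) * y ^ (j + 1)) * hpow
    have h0 : F 0 = f 0 := by simp [hF, hf, gb_zero_right hp0 hp1]
    rw [Finset.sum_congr rfl key, Finset.sum_add_distrib, ← Finset.sum_mul, h0, mul_add,
      mul_one, hS]
    ring

lemma exp_identity (N T C j : ℤ) (hT : 2 * T = N * (N + 1)) (hC : 2 * C = j * (j - 1)) :
    -T + (j - N) * ((j - N) - 1) / 2 = C - N * j := by
  obtain ⟨q, hq⟩ : Even ((j - N) * ((j - N) - 1)) := by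
    have h := Int.even_mul_succ_self ((j - N) - 1)
    have : ((j - N) - 1) * (((j - N) - 1) + 1) = (j - N) * ((j - N) - 1) := by ring
    rwa [this] at h
  have hdiv : (j - N) * ((j - N) - 1) / 2 = q := by
    rw [hq, show q + q = 2 * q by ring, Int.mul_ediv_cancel_left _ two_ne_zero]
  rw [hdiv]
  have h3 : 2 * q = (j - N) * ((j - N) - 1) := by linarith
  have h4 : 2 * (-T + q) = 2 * (C - N * j) := by linear_combination h3 - hT - hC
  linarith

lemma two_choose_two (j : ℕ) : 2 * (j.choose 2 : ℤ) = (j : ℤ) * ((j : ℤ) - 1) := by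
  induction j with
  | zero => simp
  | succ j ih =>
    rw [Nat.choose_succ_succ]
    push_cast
    push_cast at ih
    rw [Nat.choose_one_right] at *
    push_cast
    linarith [ih]

lemma finite_jtp (hp0 : 0 < p) (hp1 : p < 1) (z : ℂ) (hz : z ≠ 0) (N : ℕ) :
    (∏ k ∈ Finset.range N, (1 - z * (p : ℂ) ^ k))
      * (∏ k ∈ Finset.range N, (1 - ((p : ℂ) / z) * (p : ℂ) ^ k))
      = ∑ j ∈ Finset.range (N + N + 1), (gb p (N + N) j : ℂ) * w p z ((j : ℤ) - N) := by
  have hP : (p : ℂ) ≠ 0 := Complex.ofReal_ne_zero.mpr hp0.ne'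
  have hPn : ∀ k : ℕ, (p : ℂ) ^ k ≠ 0 := fun k => pow_ne_zero k hP
  set T : ℕ := ∑ k ∈ Finset.range N, (k + 1) with hTdef
  have hTval : 2 * (T : ℤ) = (N : ℤ) * ((N : ℤ) + 1) := by
    have h1 : ∑ k ∈ Finset.range (N + 1), k = T := by
      rw [Finset.sum_range_succ' (fun k => k) N]
      simp [hTdef]
    have h2 := Finset.sum_range_id_mul_two (N + 1)
    rw [h1] at h2
    have h3 : T * 2 = (N + 1) * N := by simpa using h2
    have h4 := congrArg (Nat.cast : ℕ → ℤ) h3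
    push_cast at h4
    linarith
  -- Gauss with y = -z / p^N
  have hg := gauss hp0 hp1 (N + N) (-z / (p : ℂ) ^ N)
  -- split the product on the left of Gauss
  rw [Finset.prod_range_add] at hg
  -- second factor equals A N
  have hsecond : ∏ k ∈ Finset.range N, (1 + -z / (p:ℂ) ^ N * (p:ℂ) ^ (N + k))
      = ∏ k ∈ Finset.range N, (1 - z * (p:ℂ) ^ k) := by
    apply Finset.prod_congr rfl
    intro k _
    rw [pow_add]
    field_simp
    ring
  -- first factor
  have hfirst : ∏ k ∈ Finset.range N, (1 + -z / (p:ℂ) ^ N * (p:ℂ) ^ k)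
      = ((-z) ^ N / (p:ℂ) ^ T) * ∏ k ∈ Finset.range N, (1 - ((p:ℂ)/z) * (p:ℂ) ^ k) := by
    rw [← Finset.prod_range_reflect (fun k => 1 + -z / (p:ℂ) ^ N * (p:ℂ) ^ k) N]
    have step : ∀ k ∈ Finset.range N,
        1 + -z / (p:ℂ) ^ N * (p:ℂ) ^ (N - 1 - k)
          = (-z / (p:ℂ) ^ (k+1)) * (1 - ((p:ℂ)/z) * (p:ℂ) ^ k) := by
      intro k hk
      have hkN : k < N := Finset.mem_range.mp hk
      have hNk : N = (N - 1 - k) + (k + 1) := by omega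
      have hsplit : (p:ℂ) ^ N = (p:ℂ) ^ (N - 1 - k) * (p:ℂ) ^ (k + 1) := by
        rw [← pow_add, ← hNk]
      rw [hsplit]
      field_simp
      ring
    rw [Finset.prod_congr rfl step, Finset.prod_mul_distrib]
    congr 1
    rw [Finset.prod_div_distrib, Finset.prod_const, Finset.prod_pow_eq_pow_sum]
    simp [hTdef]
  rw [hsecond, hfirst] at hg
  -- now hg : ((-z)^N / p^T) * B * A = ∑ ...
  have hscal : ((-z) ^ N / (p:ℂ) ^ T) ≠ 0 := by
    apply div_ne_zero (pow_ne_zero _ (neg_ne_zero.mpr hz)) (hPn T)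
  apply mul_left_cancel₀ hscal
  calc ((-z) ^ N / (p:ℂ) ^ T) *
        ((∏ k ∈ Finset.range N, (1 - z * (p : ℂ) ^ k))
          * (∏ k ∈ Finset.range N, (1 - ((p : ℂ) / z) * (p : ℂ) ^ k)))
      = ((-z) ^ N / (p:ℂ) ^ T) * (∏ k ∈ Finset.range N, (1 - ((p : ℂ) / z) * (p : ℂ) ^ k))
          * (∏ k ∈ Finset.range N, (1 - z * (p : ℂ) ^ k)) := by ring
    _ = ∑ j ∈ Finset.range (N + N + 1),
          (p : ℂ) ^ (j.choose 2) * (gb p (N + N) j : ℂ) * (-z / (p:ℂ) ^ N) ^ j := hg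
    _ = ∑ j ∈ Finset.range (N + N + 1),
          ((-z) ^ N / (p:ℂ) ^ T) * ((gb p (N + N) j : ℂ) * w p z ((j:ℤ) - N)) := by
        apply Finset.sum_congr rfl
        intro j hj
        have hA : (-1:ℂ) ^ N * (-1:ℂ) ^ ((j:ℤ) - N) = (-1:ℂ) ^ j := by
          rw [← zpow_natCast (-1:ℂ) N, ← zpow_natCast (-1:ℂ) j,
            ← zpow_add₀ (by norm_num : (-1:ℂ) ≠ 0)]
          congr 1
          ring
        have hB : z ^ N * z ^ ((j:ℤ) - N) = z ^ j := by
          rw [← zpow_natCast z N, ← zpow_natCast z j, ← zpow_add₀ hz]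
          congr 1
          ring
        have hC : ((p:ℂ) ^ T)⁻¹ * (p:ℂ) ^ (((j:ℤ) - N) * (((j:ℤ) - N) - 1) / 2)
            = (p:ℂ) ^ (j.choose 2) * ((p:ℂ) ^ (N * j))⁻¹ := by
          rw [← zpow_natCast (p:ℂ) T, ← zpow_natCast (p:ℂ) (j.choose 2),
            ← zpow_natCast (p:ℂ) (N * j), ← zpow_neg, ← zpow_neg,
            ← zpow_add₀ hP, ← zpow_add₀ hP]
          congr 1
          have := exp_identity (N:ℤ) (T:ℤ) ((j.choose 2 : ℕ):ℤ) (j:ℤ) hTval (two_choose_two j)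
          push_cast
          push_cast at this
          linarith
        have hpow : (-z / (p:ℂ) ^ N) ^ j = (-1:ℂ) ^ j * z ^ j * ((p:ℂ) ^ (N * j))⁻¹ := by
          rw [div_pow, ← pow_mul, neg_pow]
          ring
        rw [hpow]
        simp only [w]
        symm
        calc ((-z) ^ N / (p:ℂ) ^ T) *
              ((gb p (N + N) j : ℂ) * ((-1:ℂ) ^ ((j:ℤ) - N)
                * (p:ℂ) ^ (((j:ℤ) - N) * (((j:ℤ) - N) - 1) / 2) * z ^ ((j:ℤ) - N)))
            = (gb p (N + N) j : ℂ) * (((-1:ℂ) ^ N * (-1:ℂ) ^ ((j:ℤ) - N))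
                * (z ^ N * z ^ ((j:ℤ) - N))
                * (((p:ℂ) ^ T)⁻¹ * (p:ℂ) ^ (((j:ℤ) - N) * (((j:ℤ) - N) - 1) / 2))) := by
              rw [neg_pow]
              ring
          _ = (gb p (N + N) j : ℂ) * ((-1:ℂ) ^ j * z ^ j
                * ((p:ℂ) ^ (j.choose 2) * ((p:ℂ) ^ (N * j))⁻¹)) := by
              rw [hA, hB, hC]
          _ = (p:ℂ) ^ (j.choose 2) * (gb p (N + N) j : ℂ)
                * ((-1:ℂ) ^ j * z ^ j * ((p:ℂ) ^ (N * j))⁻¹) := by ring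
    _ = ((-z) ^ N / (p:ℂ) ^ T) * ∑ j ∈ Finset.range (N + N + 1),
          (gb p (N + N) j : ℂ) * w p z ((j:ℤ) - N) := by
        exact (Finset.mul_sum _ _ _).symm

/-- partial products of `poch` converge to it -/
lemma tendsto_partial_poch (hp0 : 0 < p) (hp1 : p < 1) (a : ℂ) :
    Tendsto (fun N => ∏ k ∈ Finset.range N, (1 - a * (p : ℂ) ^ k)) atTop
      (𝓝 (poch (p : ℂ) a)) := by
  by_cases hne : ∀ i : ℕ, 1 - a * (p : ℂ) ^ i ≠ 0
  · have hsum : Summable (fun i : ℕ => Complex.log (1 - a * (p : ℂ) ^ i)) := by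
      apply Summable.of_norm_bounded_eventually_nat (g := fun i => 3 / 2 * (‖a‖ * p ^ i))
      · have h1 : Summable (fun i : ℕ => (3 / 2 * ‖a‖) * p ^ i) :=
          (summable_geometric_of_lt_one hp0.le hp1).mul_left _
        exact h1.congr fun i => by ring
      · have h2 : Tendsto (fun i : ℕ => ‖a‖ * p ^ i) atTop (𝓝 (‖a‖ * 0)) :=
          (tendsto_pow_atTop_nhds_zero_of_lt_one hp0.le hp1).const_mul ‖a‖
        rw [mul_zero] at h2
        filter_upwards [h2.eventually_lt_const (by norm_num : (0:ℝ) < 1/2)] with i hi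
        have hn : ‖-(a * (p : ℂ) ^ i)‖ = ‖a‖ * p ^ i := by
          rw [norm_neg, norm_mul, norm_pow, Complex.norm_real, Real.norm_eq_abs,
            abs_of_pos hp0]
        have := Complex.norm_log_one_add_half_le_self
          (z := -(a * (p : ℂ) ^ i)) (by rw [hn]; linarith)
        rw [hn] at this
        calc ‖Complex.log (1 - a * (p:ℂ) ^ i)‖
            = ‖Complex.log (1 + -(a * (p:ℂ) ^ i))‖ := by ring_nf
          _ ≤ 3 / 2 * (‖a‖ * p ^ i) := this
    have hmult : Multipliable (fun i : ℕ => 1 - a * (p : ℂ) ^ i) :=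
      Complex.multipliable_of_summable_log hsum
    exact hmult.hasProd.tendsto_prod_nat
  · push_neg at hne
    obtain ⟨i0, h0⟩ := hne
    have hprod : HasProd (fun i : ℕ => 1 - a * (p : ℂ) ^ i) 0 := by
      rw [HasProd]
      apply tendsto_const_nhds.congr'
      filter_upwards [eventually_ge_atTop ({i0} : Finset ℕ)] with s hs
      exact (Finset.prod_eq_zero (hs (Finset.mem_singleton_self i0)) h0).symm
    have hpz : poch (p : ℂ) a = 0 := hprod.tprod_eq
    rw [hpz]
    apply tendsto_const_nhds.congr'
    filter_upwards [eventually_ge_atTop (i0 + 1)] with N hN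
    exact (Finset.prod_eq_zero (Finset.mem_range.mpr (by omega)) h0).symm

lemma qp_lower (hp0 : 0 < p) (hp1 : p < 1) (m : ℕ) :
    Real.exp (-(p / (1 - p) ^ 2)) ≤ qp p m := by
  have h1p : 0 < 1 - p := by linarith
  have base : ∀ k : ℕ, -(p ^ (k + 1) / (1 - p)) ≤ Real.log (1 - p ^ (k + 1)) := by
    intro k
    have hx : 0 < p ^ (k + 1) := pow_pos hp0 _
    have hfp := fac_pos hp0 hp1 k
    have hxp : p ^ (k + 1) ≤ p := by
      calc p ^ (k + 1) ≤ p ^ 1 := pow_le_pow_of_le_one hp0.le hp1.le (by omega)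
        _ = p := pow_one p
    have hinv : Real.log ((1 - p ^ (k + 1))⁻¹) ≤ (1 - p ^ (k + 1))⁻¹ - 1 :=
      Real.log_le_sub_one_of_pos (by positivity)
    rw [Real.log_inv] at hinv
    have h2 : (1 - p ^ (k + 1))⁻¹ - 1 = p ^ (k + 1) / (1 - p ^ (k + 1)) := by
      field_simp
      ring
    rw [h2] at hinv
    have h3 : p ^ (k + 1) / (1 - p ^ (k + 1)) ≤ p ^ (k + 1) / (1 - p) := by
      apply div_le_div_of_nonneg_left hx.le h1p
      linarith
    linarith
  have hgeo : ∑ k ∈ Finset.range m, p ^ k ≤ 1 / (1 - p) := by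
    rw [geom_sum_eq (by linarith : p ≠ 1)]
    have he : (p ^ m - 1) / (p - 1) = (1 - p ^ m) / (1 - p) := by
      rw [← neg_div_neg_eq]
      ring_nf
    rw [he]
    have hpm : 0 < p ^ m := pow_pos hp0 m
    apply div_le_div_of_nonneg_right ?_ h1p.le
    nlinarith
  have hsum_le : ∑ k ∈ Finset.range m, p ^ (k + 1) ≤ p / (1 - p) := by
    have he : ∑ k ∈ Finset.range m, p ^ (k + 1) = p * ∑ k ∈ Finset.range m, p ^ k := by
      rw [Finset.mul_sum]
      exact Finset.sum_congr rfl fun k _ => by rw [pow_succ]; ring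
    rw [he]
    calc p * ∑ k ∈ Finset.range m, p ^ k ≤ p * (1 / (1 - p)) :=
          mul_le_mul_of_nonneg_left hgeo hp0.le
      _ = p / (1 - p) := by ring
  have hlog : -(p / (1 - p) ^ 2) ≤ Real.log (qp p m) := by
    rw [qp, Real.log_prod (fun k _ => (fac_pos hp0 hp1 k).ne')]
    calc -(p / (1 - p) ^ 2) = -(1 / (1 - p)) * (p / (1 - p)) := by
          rw [neg_mul, div_mul_div_comm, one_mul, sq]
      _ ≤ -(1 / (1 - p)) * ∑ k ∈ Finset.range m, p ^ (k + 1) := by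
          apply mul_le_mul_of_nonpos_left hsum_le
          have : 0 < 1 / (1 - p) := by positivity
          linarith
      _ = ∑ k ∈ Finset.range m, -(p ^ (k + 1) / (1 - p)) := by
          rw [Finset.mul_sum]
          exact Finset.sum_congr rfl fun k _ => by ring
      _ ≤ ∑ k ∈ Finset.range m, Real.log (1 - p ^ (k + 1)) :=
          Finset.sum_le_sum fun k _ => base k
  calc Real.exp (-(p / (1 - p) ^ 2)) ≤ Real.exp (Real.log (qp p m)) :=
        Real.exp_le_exp.mpr hlog
    _ = qp p m := Real.exp_log (qp_pos hp0 hp1 m)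

lemma qp_tendsto (hp0 : 0 < p) (hp1 : p < 1) :
    Tendsto (qp p) atTop (𝓝 (⨅ m, qp p m)) :=
  tendsto_atTop_ciInf (qp_antitone hp0 hp1)
    ⟨Real.exp (-(p / (1 - p) ^ 2)), by rintro x ⟨m, rfl⟩; exact qp_lower hp0 hp1 m⟩

lemma iInf_qp_pos (hp0 : 0 < p) (hp1 : p < 1) : 0 < ⨅ m, qp p m :=
  lt_of_lt_of_le (Real.exp_pos _) (le_ciInf fun m => qp_lower hp0 hp1 m)

lemma poch_pp_eq (hp0 : 0 < p) (hp1 : p < 1) :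
    poch (p : ℂ) (p : ℂ) = ((⨅ m, qp p m : ℝ) : ℂ) := by
  have h1 : ∀ N : ℕ, ((qp p N : ℝ) : ℂ) = ∏ k ∈ Finset.range N, (1 - (p : ℂ) * (p : ℂ) ^ k) := by
    intro N
    rw [qp, Complex.ofReal_prod]
    exact Finset.prod_congr rfl fun k _ => by push_cast; rw [pow_succ]; ring
  have h2 : Tendsto (fun N => ((qp p N : ℝ) : ℂ)) atTop (𝓝 ((⨅ m, qp p m : ℝ) : ℂ)) :=
    (Complex.continuous_ofReal.tendsto _).comp (qp_tendsto hp0 hp1)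
  have h3 := h2.congr h1
  exact tendsto_nhds_unique (tendsto_partial_poch hp0 hp1 (p : ℂ)) h3

lemma tri_succ (a : ℤ) : (a + 1) * ((a + 1) - 1) / 2 = a * (a - 1) / 2 + a := by
  obtain ⟨q, hq⟩ : Even (a * (a - 1)) := by
    have h := Int.even_mul_succ_self (a - 1)
    have he : (a - 1) * ((a - 1) + 1) = a * (a - 1) := by ring
    rwa [he] at h
  have h1 : a * (a - 1) / 2 = q := by
    rw [hq, show q + q = 2 * q by ring, Int.mul_ediv_cancel_left _ two_ne_zero]
  have h2 : (a + 1) * ((a + 1) - 1) = 2 * (q + a) := by linear_combination hq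
  rw [h1, h2, Int.mul_ediv_cancel_left _ two_ne_zero]

lemma tri_pred (a : ℤ) : (a - 1) * ((a - 1) - 1) / 2 = a * (a - 1) / 2 - (a - 1) := by
  have h := tri_succ (a - 1)
  have he : (a - 1) + 1 = a := by ring
  rw [he] at h
  omega

lemma summable_bound (hp0 : 0 < p) (hp1 : p < 1) {c : ℝ} (hc : 0 < c) :
    Summable (fun n : ℤ => p ^ (n * (n - 1) / 2) * c ^ n) := by
  have hp' : (p : ℝ) ≠ 0 := hp0.ne'
  have hterm_pos : ∀ n : ℤ, 0 < p ^ (n * (n - 1) / 2) * c ^ n := fun n =>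
    mul_pos (zpow_pos hp0 _) (zpow_pos hc _)
  apply Summable.of_nat_of_neg
  · apply summable_of_ratio_norm_eventually_le (r := 1/2) (by norm_num)
    have h2 : Tendsto (fun k : ℕ => p ^ k * c) atTop (𝓝 (0 * c)) :=
      (tendsto_pow_atTop_nhds_zero_of_lt_one hp0.le hp1).mul_const c
    rw [zero_mul] at h2
    filter_upwards [h2.eventually_lt_const (by norm_num : (0:ℝ) < 1/2)] with k hk
    have hkey : p ^ ((((k+1) : ℕ) : ℤ) * ((((k+1) : ℕ) : ℤ) - 1) / 2) * c ^ (((k+1):ℕ) : ℤ)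
        = (p ^ k * c) * (p ^ (((k:ℕ) : ℤ) * (((k:ℕ) : ℤ) - 1) / 2) * c ^ ((k:ℕ) : ℤ)) := by
      push_cast
      rw [tri_succ (k : ℤ), zpow_add₀ hp' , zpow_add₀ hc.ne']
      simp only [zpow_natCast, zpow_one]
      ring
    rw [Real.norm_eq_abs, Real.norm_eq_abs, abs_of_pos (hterm_pos _), abs_of_pos (hterm_pos _),
      hkey]
    have hB := (hterm_pos ((k:ℕ) : ℤ)).le
    nlinarith [hterm_pos ((k:ℕ) : ℤ)]
  · apply summable_of_ratio_norm_eventually_le (r := 1/2) (by norm_num)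
    have h2 : Tendsto (fun k : ℕ => p ^ (k+1) * c⁻¹) atTop (𝓝 (0 * c⁻¹)) := by
      apply Tendsto.mul_const
      exact (tendsto_pow_atTop_nhds_zero_of_lt_one hp0.le hp1).comp (tendsto_add_atTop_nat 1)
    rw [zero_mul] at h2
    filter_upwards [h2.eventually_lt_const (by norm_num : (0:ℝ) < 1/2)] with k hk
    have hkey : p ^ ((-(((k+1):ℕ) : ℤ)) * ((-(((k+1):ℕ) : ℤ)) - 1) / 2) * c ^ (-(((k+1):ℕ):ℤ))
        = (p ^ (k+1) * c⁻¹)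
          * (p ^ ((-((k:ℕ) : ℤ)) * ((-((k:ℕ) : ℤ)) - 1) / 2) * c ^ (-((k:ℕ):ℤ))) := by
      have ha : (-(((k+1):ℕ) : ℤ)) = (-((k:ℕ):ℤ)) - 1 := by push_cast; ring
      rw [ha, tri_pred (-((k:ℕ):ℤ))]
      have e1 : (-((k:ℕ):ℤ)) * ((-((k:ℕ):ℤ)) - 1) / 2 - ((-((k:ℕ):ℤ)) - 1)
          = (-((k:ℕ):ℤ)) * ((-((k:ℕ):ℤ)) - 1) / 2 + ((k:ℤ) + 1) := by ring
      rw [e1, zpow_add₀ hp', show (-((k:ℕ):ℤ) - 1) = (-((k:ℕ):ℤ)) + (-1) by ring,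
        zpow_add₀ hc.ne', zpow_neg_one]
      rw [show ((k:ℤ) + 1) = (((k+1:ℕ)):ℤ) by push_cast; ring, zpow_natCast]
      ring
    rw [Real.norm_eq_abs, Real.norm_eq_abs, abs_of_pos (hterm_pos _), abs_of_pos (hterm_pos _),
      hkey]
    nlinarith [hterm_pos (-((k:ℕ):ℤ))]

lemma gb_le (hp0 : 0 < p) (hp1 : p < 1) (m j : ℕ) :
    gb p m j ≤ (Real.exp (-(p / (1 - p) ^ 2)) * Real.exp (-(p / (1 - p) ^ 2)))⁻¹ := by
  set Q := Real.exp (-(p / (1 - p) ^ 2)) with hQ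
  have hQpos : 0 < Q := Real.exp_pos _
  rw [gb]
  split
  · rw [← one_div]
    apply div_le_div₀ zero_le_one (qp_le_one hp0 hp1 m) (by positivity)
    exact mul_le_mul (qp_lower hp0 hp1 _) (qp_lower hp0 hp1 _) hQpos.le
      (qp_pos hp0 hp1 _).le
  · positivity

/-- Jacobi triple product: `(p;p)_∞ θ(z) = ∑_{n ∈ ℤ} (-1)^n p^{n(n-1)/2} z^n`. -/
theorem jacobi_triple_product (p : ℝ) (hp0 : 0 < p) (hp1 : p < 1)
    (z : ℂ) (hz : z ≠ 0) :
    poch (p : ℂ) (p : ℂ) * theta (p : ℂ) z =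
      ∑' n : ℤ, (-1 : ℂ) ^ n * (p : ℂ) ^ (n * (n - 1) / 2) * z ^ n := by
  have hP : (p : ℂ) ≠ 0 := Complex.ofReal_ne_zero.mpr hp0.ne'
  have hLpos : 0 < ⨅ m, qp p m := iInf_qp_pos hp0 hp1
  have hLC : ((⨅ m, qp p m : ℝ) : ℂ) ≠ 0 := Complex.ofReal_ne_zero.mpr hLpos.ne'
  set Q := Real.exp (-(p / (1 - p) ^ 2)) with hQ
  have hQpos : 0 < Q := Real.exp_pos _
  -- step A : tsum of jtpF is L times the partial products
  have hstepA : ∀ N : ℕ, ∑' n : ℤ, jtpF p z N n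
      = ((⨅ m, qp p m : ℝ) : ℂ)
        * ((∏ k ∈ Finset.range N, (1 - z * (p : ℂ) ^ k))
          * (∏ k ∈ Finset.range N, (1 - ((p : ℂ) / z) * (p : ℂ) ^ k))) := by
    intro N
    rw [tsum_eq_sum (s := Finset.Icc (-(N : ℤ)) (N : ℤ))
      (fun n hn => by rw [jtpF, if_neg hn]), finite_jtp hp0 hp1 z hz N, Finset.mul_sum]
    apply Finset.sum_nbij' (i := fun n : ℤ => ((N : ℤ) + n).toNat)
      (j := fun j : ℕ => (j : ℤ) - (N : ℤ))
    · intro n hn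
      simp only [Finset.mem_Icc] at hn
      simp only [Finset.mem_range]
      omega
    · intro j hj
      simp only [Finset.mem_range] at hj
      simp only [Finset.mem_Icc]
      omega
    · intro n hn
      simp only [Finset.mem_Icc] at hn
      omega
    · intro j hj
      simp only [Finset.mem_range] at hj
      omega
    · intro n hn
      rw [jtpF, if_pos hn]
      simp only [Finset.mem_Icc] at hn
      have he : ((((N : ℤ) + n).toNat : ℕ) : ℤ) - (N : ℤ) = n := by omega
      rw [he]
      ring
  -- step B : pointwise convergence
  have hqpL := qp_tendsto hp0 hp1
  have hcomp : ∀ u : ℕ → ℕ, Tendsto u atTop atTop →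
      Tendsto (fun N => qp p (u N)) atTop (𝓝 (⨅ m, qp p m)) :=
    fun u hu => hqpL.comp hu
  have hstepB : ∀ n : ℤ, Tendsto (fun N => jtpF p z N n) atTop (𝓝 (w p z n)) := by
    intro n
    have hg : Tendsto (fun N : ℕ =>
        qp p (N + N) / (qp p (((N : ℤ) + n).toNat) * qp p ((N + N) - ((N : ℤ) + n).toNat)))
        atTop (𝓝 ((⨅ m, qp p m) / ((⨅ m, qp p m) * (⨅ m, qp p m)))) := by
      apply Tendsto.div
      · exact hcomp _ (tendsto_atTop_atTop.mpr fun b => ⟨b, fun a ha => by omega⟩)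
      · exact (hcomp _ (tendsto_atTop_atTop.mpr fun b => ⟨b + n.natAbs, fun a ha => by omega⟩)).mul
          (hcomp _ (tendsto_atTop_atTop.mpr fun b => ⟨b + n.natAbs, fun a ha => by omega⟩))
      · exact (mul_pos hLpos hLpos).ne'
    have hg2 : Tendsto (fun N : ℕ => ((⨅ m, qp p m : ℝ) : ℂ)
        * ((qp p (N + N) / (qp p (((N : ℤ) + n).toNat)
            * qp p ((N + N) - ((N : ℤ) + n).toNat)) : ℝ) : ℂ) * w p z n)
        atTop (𝓝 (((⨅ m, qp p m : ℝ) : ℂ)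
          * (((⨅ m, qp p m) / ((⨅ m, qp p m) * (⨅ m, qp p m)) : ℝ) : ℂ) * w p z n)) := by
      apply Tendsto.mul_const
      apply Tendsto.const_mul
      exact (Complex.continuous_ofReal.tendsto _).comp hg
    have hval : ((⨅ m, qp p m : ℝ) : ℂ)
        * (((⨅ m, qp p m) / ((⨅ m, qp p m) * (⨅ m, qp p m)) : ℝ) : ℂ) * w p z n
        = w p z n := by
      push_cast
      field_simp
    rw [hval] at hg2
    apply hg2.congr'
    filter_upwards [eventually_ge_atTop n.natAbs] with N hN
    have hmem : n ∈ Finset.Icc (-(N : ℤ)) (N : ℤ) := by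
      simp only [Finset.mem_Icc]
      omega
    rw [jtpF, if_pos hmem, gb, if_pos (by omega : (((N : ℤ) + n).toNat) ≤ N + N)]
  -- step C : uniform bound
  have hbound : ∀ N : ℕ, ∀ n : ℤ,
      ‖jtpF p z N n‖ ≤ ((⨅ m, qp p m) * (Q * Q)⁻¹) * (p ^ (n * (n - 1) / 2) * ‖z‖ ^ n) := by
    intro N n
    have hwpos : 0 < p ^ (n * (n - 1) / 2) * ‖z‖ ^ n :=
      mul_pos (zpow_pos hp0 _) (zpow_pos (norm_pos_iff.mpr hz) _)
    have hwnorm : ‖w p z n‖ = p ^ (n * (n - 1) / 2) * ‖z‖ ^ n := by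
      rw [w, norm_mul, norm_mul, norm_zpow, norm_zpow, norm_zpow, norm_neg, norm_one,
        one_zpow, one_mul, Complex.norm_real, Real.norm_eq_abs, abs_of_pos hp0]
    rw [jtpF]
    split
    · rw [norm_mul, norm_mul, Complex.norm_real, Complex.norm_real, Real.norm_eq_abs,
        Real.norm_eq_abs, abs_of_pos hLpos, abs_of_nonneg (gb_nonneg hp0 hp1 _ _), hwnorm]
      have h1 : gb p (N + N) (((N : ℤ) + n).toNat) ≤ (Q * Q)⁻¹ := gb_le hp0 hp1 _ _
      calc (⨅ m, qp p m) * gb p (N + N) (((N : ℤ) + n).toNat)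
            * (p ^ (n * (n - 1) / 2) * ‖z‖ ^ n)
          ≤ (⨅ m, qp p m) * (Q * Q)⁻¹ * (p ^ (n * (n - 1) / 2) * ‖z‖ ^ n) := by
            apply mul_le_mul_of_nonneg_right _ hwpos.le
            exact mul_le_mul_of_nonneg_left h1 hLpos.le
        _ = _ := by ring
    · rw [norm_zero]
      positivity
  -- Tannery
  have hsummable : Summable (fun n : ℤ =>
      ((⨅ m, qp p m) * (Q * Q)⁻¹) * (p ^ (n * (n - 1) / 2) * ‖z‖ ^ n)) :=
    (summable_bound hp0 hp1 (norm_pos_iff.mpr hz)).mul_left _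
  have hTan := tendsto_tsum_of_dominated_convergence hsummable hstepB
    (Eventually.of_forall hbound)
  have hlim2 : Tendsto (fun N => ∑' n : ℤ, jtpF p z N n) atTop
      (𝓝 (((⨅ m, qp p m : ℝ) : ℂ) * (poch (p : ℂ) z * poch (p : ℂ) ((p : ℂ) / z)))) := by
    have h := ((tendsto_partial_poch hp0 hp1 z).mul
      (tendsto_partial_poch hp0 hp1 ((p : ℂ) / z))).const_mul ((⨅ m, qp p m : ℝ) : ℂ)
    exact h.congr fun N => (hstepA N).symm
  calc poch (p : ℂ) (p : ℂ) * theta (p : ℂ) z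
      = ((⨅ m, qp p m : ℝ) : ℂ) * (poch (p : ℂ) z * poch (p : ℂ) ((p : ℂ) / z)) := by
        rw [poch_pp_eq hp0 hp1, theta]
    _ = ∑' n : ℤ, w p z n := tendsto_nhds_unique hlim2 hTan
    _ = ∑' n : ℤ, (-1 : ℂ) ^ n * (p : ℂ) ^ (n * (n - 1) / 2) * z ^ n :=
        tsum_congr fun n => by rw [w]

end
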